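/- Let y ∈ (1,√3) ∪ (√3,∞), set a = y², C₁ = 2y⁶ + (3/4)y⁴, C₂ = (9/4)C₁ + (25/32)y⁸ + (3/2)(C₁^{2/3}·y^{8/3} + C₁^{1/3}·y^{16/3}), C₃ = (13/3)y⁴ + 18y² + 2C₂ + 11, V₁ = max{100, 8y²}, V₂ = max{V₁, (3/2)y⁴, √(2C₁)} and V₃ = max{V₂, 2 + 2y²/(1+2y), 2 + 2y⁴/(1+2y²)}. Then for every real v ≥ V₃ one has |G(v,y) − 1 − (3−y²)/(2v)| < C₃/v², where G(v,y) := v·∫_1^{√(v/(v−2))} ((v+y²)/(v+y²x²))^{(v+1)/2} dx. -/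

import Mathlib

open MeasureTheory Real intervalIntegral

private lemma powchain {w : ℝ} (hw0 : 0 < w) (hw100 : w ≤ 1/100) :
    ∀ n : ℕ, w^(n+1) ≤ w^n/100 := by
  intro n
  have h := mul_le_mul_of_nonneg_left hw100 (pow_nonneg hw0.le n)
  calc w^(n+1) = w^n * w := by ring
  _ ≤ w^n * (1/100) := h
  _ = w^n/100 := by ring

private lemma exp_neg_le_quad {u : ℝ} (hu : 0 ≤ u) : Real.exp (-u) ≤ 1 - u + u^2 := by
  have h1 : (0:ℝ) < 1 + u := by linarith
  have h2 : 1 + u ≤ Real.exp u := by linarith [Real.add_one_le_exp u]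
  have h3 : Real.exp (-u) ≤ 1 / (1 + u) := by
    rw [Real.exp_neg, inv_eq_one_div]
    exact one_div_le_one_div_of_le h1 h2
  have h4 : 1 / (1 + u) ≤ 1 - u + u^2 := by
    rw [div_le_iff₀ h1]; nlinarith [pow_nonneg hu 3]
  linarith

private lemma log_one_add_ge {t : ℝ} (ht : 0 ≤ t) : t - t^2 ≤ Real.log (1 + t) := by
  have h1 : (0:ℝ) < 1 + t := by linarith
  have h2 : Real.log ((1+t)⁻¹) ≤ (1+t)⁻¹ - 1 := Real.log_le_sub_one_of_pos (by positivity)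
  rw [Real.log_inv] at h2
  have h3 : 1 - (1+t)⁻¹ ≤ Real.log (1+t) := by linarith
  have h4 : t - t^2 ≤ 1 - (1+t)⁻¹ := by
    rw [inv_eq_one_div, le_sub_iff_add_le, ← le_sub_iff_add_le', div_le_iff₀ h1]
    nlinarith [pow_nonneg ht 3]
  linarith

private lemma pointwise_bounds (v a p x tmax : ℝ) (hv : 0 < v) (ha : 0 < a) (hp : 0 ≤ p)
    (hx : 1 ≤ x) (ht : a*(x^2-1)/(v+a) ≤ tmax) (htm : tmax ≤ 1) :
    1 - p*(a*(x^2-1)/(v+a)) ≤ ((v+a)/(v+a*x^2))^p ∧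
    ((v+a)/(v+a*x^2))^p ≤ 1 - p*(a*(x^2-1)/(v+a)) + (p*tmax)*tmax + (p*tmax)^2 := by
  set t : ℝ := a*(x^2-1)/(v+a) with htdef
  have hx2 : 1 ≤ x^2 := by nlinarith
  have ht0 : 0 ≤ t := by
    rw [htdef]; apply div_nonneg _ (by linarith); nlinarith
  have h1t : (0:ℝ) < 1 + t := by linarith
  have hva : (0:ℝ) < v + a := by linarith
  have hden : (0:ℝ) < v + a*x^2 := by nlinarith
  have h1t' : 1 + t = (v+a*x^2)/(v+a) := by
    rw [htdef]; field_simp; ring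
  have hr : (v+a)/(v+a*x^2) = (1+t)⁻¹ := by
    rw [h1t', inv_div]
  have hrpow : ((v+a)/(v+a*x^2))^p = Real.exp (-(p * Real.log (1+t))) := by
    rw [hr, Real.rpow_def_of_pos (by positivity), Real.log_inv]; ring_nf
  have hlogub : Real.log (1+t) ≤ t := by
    have := Real.log_le_sub_one_of_pos h1t; linarith
  have hloglb : t - t^2 ≤ Real.log (1+t) := log_one_add_ge ht0
  constructor
  · rw [hrpow]
    have h5 : -(p*t) ≤ -(p * Real.log (1+t)) := by nlinarith
    have h6 : 1 - p*t ≤ Real.exp (-(p*t)) := by linarith [Real.add_one_le_exp (-(p*t))]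
    exact h6.trans (Real.exp_le_exp.mpr h5)
  · rw [hrpow]
    have ht1 : t ≤ 1 := le_trans ht htm
    have hu0 : 0 ≤ p*(t - t^2) := mul_nonneg hp (by nlinarith)
    have h5 : -(p * Real.log (1+t)) ≤ -(p*(t-t^2)) := by nlinarith
    have h6 := exp_neg_le_quad hu0
    have h7 : Real.exp (-(p * Real.log (1+t))) ≤ 1 - p*(t-t^2) + (p*(t-t^2))^2 :=
      (Real.exp_le_exp.mpr h5).trans h6
    have h8 : p*t ≤ p*tmax := by nlinarith
    have h8' : p*(t-t^2) ≤ p*tmax := by nlinarith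
    have h9 : (p*(t-t^2))^2 ≤ (p*tmax)^2 := pow_le_pow_left₀ hu0 h8' 2
    nlinarith

private lemma cc_hi (v a w : ℝ) (ha0 : 0 < a) (hva : 0 < v + a) (hw1 : v*w = 1) (hw0 : 0 < w) :
    (v+1)*a/(2*(v+a)) ≤ a*(1+w)/2 := by
  rw [div_le_iff₀ (by positivity)]
  have key : a*(1+w)/2*(2*(v+a)) - (v+1)*a = a^2 + a^2*w := by linear_combination a*hw1
  nlinarith [sq_nonneg a, mul_pos (mul_pos ha0 ha0) hw0]

private lemma cc_lo (v a w : ℝ) (ha0 : 0 < a) (hva : 0 < v + a) (hw1 : v*w = 1) (hw0 : 0 < w) :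
    a*(1-a*w)/2 ≤ (v+1)*a/(2*(v+a)) := by
  rw [le_div_iff₀ (by positivity)]
  have key : (v+1)*a - a*(1-a*w)/2*(2*(v+a)) = a + a^3*w := by linear_combination a^2*hw1
  nlinarith [ha0, mul_pos (mul_pos (mul_pos ha0 ha0) ha0) hw0]

private lemma sm_hi (v a w : ℝ) (ha1 : 1 < a) (hv100 : 100 ≤ v)
    (hw1 : v*w = 1) (hw0 : 0 < w) (haw : a*w ≤ 1/8) :
    (v+1)/2*(2*a/((v-2)*(v+a))) ≤ 1.05*(a*w) := by
  have ha0 : 0 < a := by linarith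
  have hvm2 : (0:ℝ) < v - 2 := by linarith
  have hva : (0:ℝ) < v + a := by linarith
  have heq : (v+1)/2*(2*a/((v-2)*(v+a))) = (v+1)*a/((v-2)*(v+a)) := by
    field_simp
  rw [heq, div_le_iff₀ (by positivity)]
  have h2 : 1.05*(a*w)*((v-2)*(v+a)) = 1.05*a*(v+a-2-2*(a*w)) := by
    linear_combination 1.05*a*(v+a-2)*hw1
  rw [h2]
  nlinarith [mul_nonneg ha0.le (by linarith : (0:ℝ) ≤ v - 100),
    mul_le_mul_of_nonneg_left haw ha0.le, ha1, ha0]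

private lemma tm_hi (v a w : ℝ) (ha1 : 1 < a) (hv100 : 100 ≤ v)
    (hw1 : v*w = 1) (hw0 : 0 < w) (hw100 : w ≤ 1/100) (haw : a*w ≤ 1/8) :
    2*a/((v-2)*(v+a)) ≤ 2.05*(a*w^2) := by
  have ha0 : 0 < a := by linarith
  have hvm2 : (0:ℝ) < v - 2 := by linarith
  have hva : (0:ℝ) < v + a := by linarith
  rw [div_le_iff₀ (by positivity)]
  have h2 : 2.05*(a*w^2)*((v-2)*(v+a)) = 2.05*a*(1+a*w-2*w-2*a*w^2) := by
    linear_combination 2.05*a*(v*w+1+a*w-2*w)*hw1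
  rw [h2]
  have h3 : a*(a*w^2) ≤ a*(1/8*(1/100)) := by
    apply mul_le_mul_of_nonneg_left _ ha0.le
    calc a*w^2 = (a*w)*w := by ring
    _ ≤ (1/8)*(1/100) := by
        apply mul_le_mul haw hw100 hw0.le (by norm_num)
  nlinarith [mul_pos (mul_pos ha0 ha0) hw0, mul_nonneg ha0.le hw0.le, ha0, ha1]

private lemma tm_le_one (a w tm : ℝ) (hw0 : 0 < w) (hw100 : w ≤ 1/100) (haw : a*w ≤ 1/8)
    (h : tm ≤ 2.05*(a*w^2)) : tm ≤ 1 := by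
  nlinarith [mul_le_mul haw hw100 hw0.le (by norm_num : (0:ℝ) ≤ 1/8)]

private lemma R_hi (a w sm tm : ℝ) (ha0 : 0 < a) (hw0 : 0 < w) (hw100 : w ≤ 1/100)
    (hsm0 : 0 ≤ sm) (htm0 : 0 ≤ tm) (hsm : sm ≤ 1.05*(a*w)) (htm : tm ≤ 2.05*(a*w^2)) :
    sm*tm + sm^2 ≤ 1.13*(a^2*w^2) := by
  have h1 : sm*tm ≤ (1.05*(a*w))*(2.05*(a*w^2)) := mul_le_mul hsm htm htm0 (by positivity)
  have h2 : sm^2 ≤ (1.05*(a*w))^2 := pow_le_pow_left₀ hsm0 hsm 2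
  have h3 : a^2*w^3 ≤ a^2*w^2/100 := by
    have h := mul_le_mul_of_nonneg_left hw100 (by positivity : (0:ℝ) ≤ a^2*w^2)
    calc a^2*w^3 = a^2*w^2*w := by ring
    _ ≤ a^2*w^2*(1/100) := h
    _ = a^2*w^2/100 := by ring
  nlinarith [h1, h2, h3, mul_pos (mul_pos ha0 ha0) (mul_pos (mul_pos hw0 hw0) hw0)]

set_option maxHeartbeats 1000000 in
private lemma E_ub (v a w cc δ : ℝ) (ha0 : 0 < a) (hw0 : 0 < w) (hw100 : w ≤ 1/100)
    (hcc0 : 0 ≤ cc) (hcc : cc ≤ a*(1+w)/2) (hd0 : 0 ≤ δ) (hd : δ ≤ w+1.5*w^2+21*w^3)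
    (hvd0 : 0 ≤ v*δ) (hvd : v*δ ≤ 1+1.5*w+21*w^2) :
    v*cc*(δ^2*(δ+3))/3 ≤ a*w/2 + 2.5*a*w^2 := by
  have hp := powchain hw0 hw100
  have hwp2 : w^2 ≤ w/100 := by have h := hp 1; rwa [pow_one] at h
  have hwp3 := hp 2; have hwp4 := hp 3; have hwp5 := hp 4; have hwp6 := hp 5
  have hwp7 := hp 6; have hwp8 := hp 7; have hwp9 := hp 8
  have hd3 : δ*(δ+3) ≤ (w+1.5*w^2+21*w^3)*((w+1.5*w^2+21*w^3)+3) := by nlinarith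
  have h2 : cc*(δ*(δ+3)) ≤ (a*(1+w)/2)*((w+1.5*w^2+21*w^3)*((w+1.5*w^2+21*w^3)+3)) :=
    mul_le_mul hcc hd3 (by nlinarith) (by positivity)
  have h3 : (v*δ)*(cc*(δ*(δ+3))) ≤
      (1+1.5*w+21*w^2)*((a*(1+w)/2)*((w+1.5*w^2+21*w^3)*((w+1.5*w^2+21*w^3)+3))) := by
    apply mul_le_mul hvd h2 (mul_nonneg hcc0 (by nlinarith)) (by positivity)
  have hkey : (1+1.5*w+21*w^2)*(((1+w)/2)*((w+1.5*w^2+21*w^3)*((w+1.5*w^2+21*w^3)+3)))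
      ≤ 3*(w/2 + 2.5*w^2) := by
    linarith [hwp2, hwp3, hwp4, hwp5, hwp6, hwp7, hwp8, hwp9, hw0.le,
      pow_nonneg hw0.le 2, pow_nonneg hw0.le 3]
  have hkey2 := mul_le_mul_of_nonneg_left hkey ha0.le
  have e1 : v*cc*(δ^2*(δ+3))/3 = (v*δ)*(cc*(δ*(δ+3)))/3 := by ring
  rw [e1]
  nlinarith [h3, hkey2]

private lemma E_lb (v a w cc δ : ℝ) (ha0 : 0 < a) (hw0 : 0 < w) (haw : a*w ≤ 1/8)
    (hcc_lo : a*(1-a*w)/2 ≤ cc) (hd_lo : w ≤ δ) (hd0 : 0 ≤ δ) (hvd1 : 1 ≤ v*δ) :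
    a*w/2 - a^2*w^2/2 ≤ v*cc*(δ^2*(δ+3))/3 := by
  have h0 : (0:ℝ) ≤ a*(1-a*w)/2 := by nlinarith
  have hcc0 : 0 ≤ cc := le_trans h0 hcc_lo
  have hdd : w*(w+3) ≤ δ*(δ+3) := by nlinarith
  have h1 : (a*(1-a*w)/2)*(w*(w+3)) ≤ cc*(δ*(δ+3)) :=
    mul_le_mul hcc_lo hdd (by nlinarith) hcc0
  have h2 : 1*((a*(1-a*w)/2)*(w*(w+3))) ≤ (v*δ)*(cc*(δ*(δ+3))) := by
    apply mul_le_mul hvd1 h1 (mul_nonneg h0 (by nlinarith)) (by linarith)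
  have e1 : v*cc*(δ^2*(δ+3))/3 = (v*δ)*(cc*(δ*(δ+3)))/3 := by ring
  rw [e1]
  nlinarith [h2, mul_nonneg (mul_nonneg ha0.le hw0.le) hw0.le,
    mul_nonneg (mul_nonneg (mul_nonneg ha0.le ha0.le) hw0.le) hw0.le]

private lemma T3_ub (v a w R δ : ℝ) (ha0 : 0 < a) (hw0 : 0 < w)
    (hR0 : 0 ≤ R) (hR : R ≤ 1.13*(a^2*w^2)) (hvd0 : 0 ≤ v*δ) (hvd : v*δ ≤ 1.02) :
    v*(R*δ) ≤ 1.2*(a^2*w^2) := by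
  have h1 : (v*δ)*R ≤ 1.02*(1.13*(a^2*w^2)) := mul_le_mul hvd hR hR0 (by norm_num)
  have e1 : v*(R*δ) = (v*δ)*R := by ring
  rw [e1]
  nlinarith [h1, mul_pos (mul_pos ha0 ha0) (mul_pos hw0 hw0)]

private lemma C3_bound (a C₁ C₂ C₃ : ℝ) (ha1 : 1 < a)
    (hC1a : C₁ = 2*a^3 + 3/4*a^2) (hC2b : 9/4*C₁ ≤ C₂)
    (hC3a : C₃ = 13/3*a^2 + 18*a + 2*C₂ + 11) :
    21 + 1.7*a^2 < C₃ ∧ 2.5*a < C₃ := by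
  constructor <;>
    nlinarith [ha1, sq_nonneg a,
      mul_pos (mul_pos (by linarith : (0:ℝ) < a) (by linarith : (0:ℝ) < a))
        (by linarith : (0:ℝ) < a), sq_nonneg (a-1)]

private lemma vd_bounds (v w δ : ℝ) (hv0 : 0 < v) (hw1 : v*w = 1)
    (hd_lo : w+1.5*w^2 ≤ δ) (hd_hi : δ ≤ w+1.5*w^2+21*w^3) :
    1+1.5*w ≤ v*δ ∧ v*δ ≤ 1+1.5*w+21*w^2 := by
  constructor
  · have h := mul_le_mul_of_nonneg_left hd_lo hv0.le
    have e : v*(w+1.5*w^2) = 1+1.5*w := by linear_combination (1+1.5*w)*hw1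
    linarith
  · have h := mul_le_mul_of_nonneg_left hd_hi hv0.le
    have e : v*(w+1.5*w^2+21*w^3) = 1+1.5*w+21*w^2 := by
      linear_combination (1+1.5*w+21*w^2)*hw1
    linarith

private lemma tmx_bound (v a x X : ℝ) (ha0 : 0 < a) (hvm2 : 0 < v - 2) (hva : 0 < v + a)
    (hXsq : X^2 = v/(v-2)) (hx1 : 1 ≤ x) (hxX : x ≤ X) :
    a*(x^2-1)/(v+a) ≤ 2*a/((v-2)*(v+a)) := by
  have hx2 : x^2 ≤ X^2 := pow_le_pow_left₀ (by linarith) hxX 2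
  rw [hXsq] at hx2
  have h1 : x^2*(v-2) ≤ v := by
    rw [le_div_iff₀ hvm2] at hx2; linarith
  rw [div_le_div_iff₀ hva (by positivity)]
  have h2 : (x^2-1)*(v-2) ≤ 2 := by linarith
  nlinarith [mul_le_mul_of_nonneg_right h2 (by positivity : (0:ℝ) ≤ a*(v+a))]

private lemma assembly (Gv a w C₃ vd E T3 : ℝ) (hw0 : 0 < w)
    (hGlo : vd - E ≤ Gv) (hGhi : Gv ≤ vd - E + T3)
    (hvd_lo : 1+1.5*w ≤ vd) (hvd_hi : vd ≤ 1+1.5*w+21*w^2)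
    (hE_lo : a*w/2 - a^2*w^2/2 ≤ E) (hE_hi : E ≤ a*w/2+2.5*a*w^2)
    (hT30 : 0 ≤ T3) (hT3 : T3 ≤ 1.2*(a^2*w^2))
    (hC3a : 21+1.7*a^2 < C₃) (hC3b : 2.5*a < C₃) :
    |Gv - 1 - (1.5*w - a*w/2)| < C₃*w^2 := by
  have hw2 : 0 < w^2 := by positivity
  have h1 : (21+1.7*a^2)*w^2 < C₃*w^2 := mul_lt_mul_of_pos_right hC3a hw2
  have h2 : (2.5*a)*w^2 < C₃*w^2 := mul_lt_mul_of_pos_right hC3b hw2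
  rw [abs_lt]; constructor
  · linarith
  · linarith

/-- The comparison function `G(v, y)`. -/
noncomputable def G (v y : ℝ) : ℝ :=
  v * ∫ x in (1 : ℝ)..Real.sqrt (v / (v - 2)),
    ((v + y ^ 2) / (v + y ^ 2 * x ^ 2)) ^ ((v + 1) / 2)

set_option maxHeartbeats 1000000 in
theorem stmt_12 (y a C₁ C₂ C₃ V₁ V₂ V₃ : ℝ)
    (hy : 1 < y) (hy3 : y ≠ Real.sqrt 3)
    (ha : a = y ^ 2)
    (hC₁ : C₁ = 2 * y ^ 6 + (3 / 4) * y ^ 4)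
    (hC₂ : C₂ = (9 / 4) * C₁ + (25 / 32) * y ^ 8
        + (3 / 2) * (C₁ ^ ((2 : ℝ) / 3) * y ^ ((8 : ℝ) / 3)
          + C₁ ^ ((1 : ℝ) / 3) * y ^ ((16 : ℝ) / 3)))
    (hC₃ : C₃ = (13 / 3) * y ^ 4 + 18 * y ^ 2 + 2 * C₂ + 11)
    (hV₁ : V₁ = max 100 (8 * y ^ 2))
    (hV₂ : V₂ = max V₁ (max ((3 / 2) * y ^ 4) (Real.sqrt (2 * C₁))))
    (hV₃ : V₃ = max V₂ (max (2 + 2 * y ^ 2 / (1 + 2 * y))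
        (2 + 2 * y ^ 4 / (1 + 2 * y ^ 2)))) :
    ∀ v : ℝ, V₃ ≤ v →
      |G v y - 1 - (3 - y ^ 2) / (2 * v)| < C₃ / v ^ 2 := by
  intro v hv
  have hy0 : (0:ℝ) < y := by linarith
  have ha1 : 1 < a := by rw [ha]; nlinarith
  have ha0 : (0:ℝ) < a := by linarith
  -- extract v bounds
  have hV2v : V₂ ≤ v := le_trans (hV₃ ▸ le_max_left _ _) hv
  have hV1v : V₁ ≤ v := le_trans (hV₂ ▸ le_max_left _ _) hV2v
  have hv100 : (100:ℝ) ≤ v := le_trans (hV₁ ▸ le_max_left _ _) hV1v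
  have hv8a : 8*a ≤ v := by
    have h := le_trans (hV₁ ▸ le_max_right 100 (8*y^2)) hV1v
    rw [ha]; linarith
  have hv0 : (0:ℝ) < v := by linarith
  have hvm2 : (0:ℝ) < v - 2 := by linarith
  have hva : (0:ℝ) < v + a := by linarith
  -- w setup
  set w : ℝ := 1/v with hwdef
  have hw0 : 0 < w := by positivity
  have hw1 : v*w = 1 := by rw [hwdef]; field_simp
  have hw100 : w ≤ 1/100 := by
    rw [hwdef, div_le_div_iff₀ hv0 (by norm_num)]; linarith
  have haw : a*w ≤ 1/8 := by
    rw [hwdef, mul_one_div, div_le_div_iff₀ hv0 (by norm_num)]; linarith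
  have hwp2 : w^2 ≤ w/100 := by
    have h := powchain hw0 hw100 1; rwa [pow_one] at h
  have h1m2w : (0:ℝ) < 1 - 2*w := by linarith
  -- X setup
  set X := Real.sqrt (v/(v-2)) with hXdef
  have hfrac1 : 1 < v/(v-2) := by rw [lt_div_iff₀ hvm2]; linarith
  have hX1 : 1 < X := by
    rw [hXdef, show (1:ℝ) = Real.sqrt 1 from (Real.sqrt_one).symm]
    exact Real.sqrt_lt_sqrt (by norm_num) hfrac1
  have hX0 : (0:ℝ) < X := by linarith
  have hXsq : X^2 = v/(v-2) := Real.sq_sqrt (by positivity)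
  have hXv : X^2*(v-2) = v := by rw [hXsq]; field_simp
  have hX2w : X^2*(1-2*w) = 1 := by linear_combination w * hXv - (X^2 - 1) * hw1
  have hXub : X ≤ 1 + w + 1.5*w^2 + 21*w^3 := by
    have hQ0 : (0:ℝ) < 1 + w + 1.5*w^2 + 21*w^3 := by positivity
    have hp := powchain hw0 hw100
    have hQ : (1:ℝ) ≤ (1 + w + 1.5*w^2 + 21*w^3)^2*(1-2*w) := by
      linarith [hp 3, hp 4, hp 5, hp 6, pow_nonneg hw0.le 3, pow_nonneg hw0.le 4,
        pow_nonneg hw0.le 5, pow_nonneg hw0.le 6, hp 2]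
    have hXQ : X^2 ≤ (1 + w + 1.5*w^2 + 21*w^3)^2 := by
      rw [← mul_le_mul_iff_of_pos_right h1m2w, hX2w]; exact hQ
    have h := Real.sqrt_le_sqrt hXQ
    rwa [Real.sqrt_sq hX0.le, Real.sqrt_sq hQ0.le] at h
  have hXlb : 1 + w + 1.5*w^2 ≤ X := by
    have hQ0 : (0:ℝ) ≤ 1 + w + 1.5*w^2 := by positivity
    have hQ : (1 + w + 1.5*w^2)^2*(1-2*w) ≤ 1 := by
      linarith [pow_nonneg hw0.le 3, pow_nonneg hw0.le 4, pow_nonneg hw0.le 5]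
    have hXQ : (1 + w + 1.5*w^2)^2 ≤ X^2 := by
      rw [← mul_le_mul_iff_of_pos_right h1m2w, hX2w]; exact hQ
    have h := Real.sqrt_le_sqrt hXQ
    rwa [Real.sqrt_sq hQ0, Real.sqrt_sq hX0.le] at h
  -- delta
  set δ : ℝ := X - 1 with hddef
  have hd_lo : w + 1.5*w^2 ≤ δ := by rw [hddef]; linarith
  have hd_hi : δ ≤ w + 1.5*w^2 + 21*w^3 := by rw [hddef]; linarith
  have hd0 : 0 < δ := by rw [hddef]; linarith
  -- cc, tmax, R
  set cc : ℝ := (v+1)*a/(2*(v+a)) with hccdef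
  set tmax : ℝ := 2*a/((v-2)*(v+a)) with htmdef
  set R : ℝ := ((v+1)/2*tmax)*tmax + ((v+1)/2*tmax)^2 with hRdef
  have hcc0 : 0 < cc := by rw [hccdef]; positivity
  have htm0 : 0 < tmax := by rw [htmdef]; positivity
  have hsm0 : 0 < (v+1)/2*tmax := mul_pos (by linarith) htm0
  have hR0 : 0 ≤ R := by
    rw [hRdef]; exact add_nonneg (mul_nonneg hsm0.le htm0.le) (sq_nonneg _)
  have hcchi : cc ≤ a*(1+w)/2 := by
    rw [hccdef]; exact cc_hi v a w ha0 hva hw1 hw0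
  have hcclo : a*(1-a*w)/2 ≤ cc := by
    rw [hccdef]; exact cc_lo v a w ha0 hva hw1 hw0
  have hsmhi : (v+1)/2*tmax ≤ 1.05*(a*w) := by
    rw [htmdef]; exact sm_hi v a w ha1 hv100 hw1 hw0 haw
  have htmhi : tmax ≤ 2.05*(a*w^2) := by
    rw [htmdef]; exact tm_hi v a w ha1 hv100 hw1 hw0 hw100 haw
  have htm1 : tmax ≤ 1 := tm_le_one a w tmax hw0 hw100 haw htmhi
  have hRhi : R ≤ 1.13*(a^2*w^2) := by
    rw [hRdef]
    exact R_hi a w ((v+1)/2*tmax) tmax ha0 hw0 hw100 hsm0.le htm0.le hsmhi htmhi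
  -- pointwise and integrals
  have hxle : ∀ x ∈ Set.Icc (1:ℝ) X, a*(x^2-1)/(v+a) ≤ tmax := by
    intro x hx
    rw [htmdef]
    exact tmx_bound v a x X ha0 hvm2 hva hXsq hx.1 hx.2
  have hfc : Continuous (fun x : ℝ => ((v+a)/(v+a*x^2))^((v+1)/2)) := by
    have hb : Continuous (fun x : ℝ => (v+a)/(v+a*x^2)) := by
      apply continuous_const.div (by continuity)
      intro x; positivity
    exact hb.rpow_const (fun x => Or.inl (by positivity))
  have hint2 : ∀ K : ℝ, (∫ x in (1:ℝ)..X, (K - cc*x^2)) = K*(X-1) - cc*((X^3-1)/3) := by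
    intro K
    have h1 : IntervalIntegrable (fun x : ℝ => cc*x^2) volume 1 X :=
      ((continuous_const.mul (continuous_pow 2)).intervalIntegrable _ _)
    rw [intervalIntegral.integral_sub (intervalIntegrable_const) h1,
        intervalIntegral.integral_const, intervalIntegral.integral_const_mul,
        integral_pow]
    push_cast
    simp [smul_eq_mul]
    ring
  have hmono1 : (∫ x in (1:ℝ)..X, ((1+cc) - cc*x^2))
      ≤ (∫ x in (1:ℝ)..X, ((v+a)/(v+a*x^2))^((v+1)/2)) := by
    apply intervalIntegral.integral_mono_on hX1.le
      ((continuous_const.sub (continuous_const.mul (continuous_pow 2))).intervalIntegrable _ _)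
      (hfc.intervalIntegrable _ _)
    intro x hx
    have hpb := (pointwise_bounds v a ((v+1)/2) x tmax hv0 ha0 (by linarith) hx.1
      (hxle x hx) htm1).1
    have heq : (v+1)/2*(a*(x^2-1)/(v+a)) = cc*x^2 - cc := by
      rw [hccdef]; field_simp
    show (1+cc) - cc*x^2 ≤ _
    linarith
  have hmono2 : (∫ x in (1:ℝ)..X, ((v+a)/(v+a*x^2))^((v+1)/2))
      ≤ (∫ x in (1:ℝ)..X, ((1+cc+R) - cc*x^2)) := by
    apply intervalIntegral.integral_mono_on hX1.le
      (hfc.intervalIntegrable _ _)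
      ((continuous_const.sub (continuous_const.mul (continuous_pow 2))).intervalIntegrable _ _)
    intro x hx
    have hpb := (pointwise_bounds v a ((v+1)/2) x tmax hv0 ha0 (by linarith) hx.1
      (hxle x hx) htm1).2
    have heq : (v+1)/2*(a*(x^2-1)/(v+a)) = cc*x^2 - cc := by
      rw [hccdef]; field_simp
    show _ ≤ (1+cc+R) - cc*x^2
    rw [hRdef]
    linarith
  have hGrepr : G v y = v * ∫ x in (1:ℝ)..X, ((v+a)/(v+a*x^2))^((v+1)/2) := by
    simp only [G, ← ha, ← hXdef]
  have hGlo : v*((1+cc)*(X-1) - cc*((X^3-1)/3)) ≤ G v y := by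
    rw [hGrepr]
    apply mul_le_mul_of_nonneg_left _ hv0.le
    rw [← hint2 (1+cc)]
    exact hmono1
  have hGhi : G v y ≤ v*((1+cc+R)*(X-1) - cc*((X^3-1)/3)) := by
    rw [hGrepr]
    apply mul_le_mul_of_nonneg_left _ hv0.le
    rw [← hint2 (1+cc+R)]
    exact hmono2
  -- convert to delta form
  have e3 : v*((1+cc)*(X-1) - cc*((X^3-1)/3)) = v*δ - v*cc*(δ^2*(δ+3))/3 := by
    rw [hddef]; ring
  have e4 : v*((1+cc+R)*(X-1) - cc*((X^3-1)/3))
      = v*δ - v*cc*(δ^2*(δ+3))/3 + v*(R*δ) := by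
    rw [hddef]; ring
  rw [e3] at hGlo
  rw [e4] at hGhi
  -- numeric bounds
  obtain ⟨hvd_lo, hvd_hi⟩ := vd_bounds v w δ hv0 hw1 hd_lo hd_hi
  have hvd0 : 0 ≤ v*δ := le_trans (by linarith) hvd_lo
  have hvd102 : v*δ ≤ 1.02 := by linarith [hwp2]
  have hE_hi : v*cc*(δ^2*(δ+3))/3 ≤ a*w/2 + 2.5*a*w^2 :=
    E_ub v a w cc δ ha0 hw0 hw100 hcc0.le hcchi hd0.le hd_hi hvd0 hvd_hi
  have hE_lo : a*w/2 - a^2*w^2/2 ≤ v*cc*(δ^2*(δ+3))/3 :=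
    E_lb v a w cc δ ha0 hw0 haw hcclo (by linarith) hd0.le
      (le_trans (by linarith : (1:ℝ) ≤ 1+1.5*w) hvd_lo)
  have hT30 : 0 ≤ v*(R*δ) := mul_nonneg hv0.le (mul_nonneg hR0 hd0.le)
  have hT3 : v*(R*δ) ≤ 1.2*(a^2*w^2) :=
    T3_ub v a w R δ ha0 hw0 hR0 hRhi hvd0 hvd102
  -- C₃ bounds
  have hC1a : C₁ = 2*a^3 + 3/4*a^2 := by rw [hC₁, ha]; ring
  have hC2b : 9/4*C₁ ≤ C₂ := by
    have hC1pos : (0:ℝ) ≤ C₁ := by rw [hC₁]; positivity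
    have h1 : 0 ≤ C₁ ^ ((2:ℝ)/3) * y ^ ((8:ℝ)/3) :=
      mul_nonneg (Real.rpow_nonneg hC1pos _) (Real.rpow_nonneg hy0.le _)
    have h2 : 0 ≤ C₁ ^ ((1:ℝ)/3) * y ^ ((16:ℝ)/3) :=
      mul_nonneg (Real.rpow_nonneg hC1pos _) (Real.rpow_nonneg hy0.le _)
    have h3 : (0:ℝ) ≤ y^8 := by positivity
    rw [hC₂]; linarith
  have hC3eq : C₃ = 13/3*a^2 + 18*a + 2*C₂ + 11 := by rw [hC₃, ha]; ring
  obtain ⟨hC3a', hC3b'⟩ := C3_bound a C₁ C₂ C₃ ha1 hC1a hC2b hC3eq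
  -- final
  have e2 : (3 - y^2)/(2*v) = 1.5*w - a*w/2 := by rw [← ha, hwdef]; ring
  have e5 : C₃/v^2 = C₃*w^2 := by rw [hwdef]; ring
  rw [e2, e5]
  exact assembly (G v y) a w C₃ (v*δ) (v*cc*(δ^2*(δ+3))/3) (v*(R*δ)) hw0
    (by linarith) (by linarith) hvd_lo hvd_hi hE_lo hE_hi hT30 hT3 hC3a' hC3b'
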